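/- arXiv:2501.15483 — 2 statements merged into one kernel-verified Lean document; each statement's English description precedes it below -/
import Mathlib

section
/- If α² ≥ 4γδ with α, γ, δ ≥ 0 and α > 0, then for every n ≥ 0 the polynomial value f_n(−γδ/α²) is strictly positive, where f_n is defined by f_0 = f_1 = 1 and f_n(λ) = f_{n−1}(λ) + λ·f_{n−2}(λ). -/
/-- The Fibonacci weight polynomials, defined by the recurrence
`f 0 = f 1 = 1`, `f (n+2) = f (n+1) + λ f n`. -/
noncomputable def snakeFib : ℕ → ℝ → ℝ
  | 0, _ => 1
  | 1, _ => 1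
  | (n + 2), l => snakeFib (n + 1) l + l * snakeFib n l

lemma snakeFib_aux (l : ℝ) (hl : -(1/4) ≤ l) :
    ∀ n, 0 < snakeFib n l ∧ snakeFib n l / 2 ≤ snakeFib (n + 1) l := by
  intro n
  induction n using Nat.strong_induction_on with
  | _ n ih =>
    match n with
    | 0 => simp [snakeFib]; norm_num
    | 1 => simp [snakeFib]; linarith
    | (m + 2) =>
      obtain ⟨h1, h2⟩ := ih m (by omega)
      obtain ⟨h3, h4⟩ := ih (m + 1) (by omega)
      have key : snakeFib (m + 1) l / 2 ≤ snakeFib (m + 2) l := by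
        show snakeFib (m+1) l / 2 ≤ snakeFib (m + 1) l + l * snakeFib m l
        nlinarith
      have hpos : 0 < snakeFib (m + 2) l := by nlinarith
      refine ⟨hpos, ?_⟩
      show snakeFib (m + 2) l / 2 ≤ snakeFib (m + 2) l + l * snakeFib (m + 1) l
      nlinarith

theorem snakeFib_pos_of_probabilistic_regime (α γ δ : ℝ)
    (hα : 0 < α) (hγ : 0 ≤ γ) (hδ : 0 ≤ δ) (h : 4 * γ * δ ≤ α ^ 2) (n : ℕ) :
    0 < snakeFib n (-(γ * δ) / α ^ 2) := by
  have hα2 : 0 < α ^ 2 := by positivity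
  have hl : -(1/4) ≤ -(γ * δ) / α ^ 2 := by
    rw [neg_div, neg_le_neg_iff, div_le_div_iff₀ hα2 (by norm_num)]
    nlinarith
  exact (snakeFib_aux _ hl n).1
end

section
/- Let n ≥ 1, ℓ ≥ 1, let ω = e^{2πi/n}, and fix z_k := ω^{(n−ℓ+1)/2 + (k−1)} for k = 1,…,ℓ (n-th roots of (−1)^{n−ℓ+1}). For an ℓ-tuple h = (h₁,…,h_ℓ) of distinct integers in {0,…,n−1}, define the matrix A^h by A^h_{j,k} = z_k^{h_j}. Then det A^h = sgn(σ_h)·(−1)^{∑_r h_r}·i^{ℓ(ℓ−1)/2}·∏_{1≤j<k≤ℓ} |ω^{h_k} − ω^{h_j}|, where σ_h is the unique permutation sorting h into increasing order. -/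
open Complex Real

section Aux

open Finset

private lemma prod_pairsL {M : Type*} [CommMonoid M] {ℓ : ℕ} (f : Fin ℓ → Fin ℓ → M) :
    ∏ p ∈ Finset.univ.filter (fun p : Fin ℓ × Fin ℓ => p.1 < p.2), f p.1 p.2
      = ∏ i, ∏ j ∈ Finset.Ioi i, f i j := by
  rw [Finset.prod_sigma']
  exact Finset.prod_nbij' (fun p => ⟨p.1, p.2⟩) (fun p => (p.1, p.2))
    (by simp) (by simp) (by simp) (by simp) (by simp)

private lemma sum_Ioi_swapL {ℓ : ℕ} (g : Fin ℓ → ℕ) :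
    ∑ i, ∑ j ∈ Finset.Ioi i, g j = ∑ j, ∑ i ∈ Finset.Iio j, g j := by
  rw [Finset.sum_sigma', Finset.sum_sigma']
  exact Finset.sum_nbij' (fun p => ⟨p.2, p.1⟩) (fun p => ⟨p.2, p.1⟩)
    (by simp) (by simp) (by simp) (by simp) (by simp)

private lemma sum_pairs_natL {ℓ : ℕ} (g : Fin ℓ → ℕ) :
    ∑ i, ∑ j ∈ Finset.Ioi i, (g i + g j) = (ℓ - 1) * ∑ i, g i := by
  have h1 : ∀ i : Fin ℓ, ∑ j ∈ Finset.Ioi i, (g i + g j)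
      = (ℓ - 1 - (i:ℕ)) * g i + ∑ j ∈ Finset.Ioi i, g j := by
    intro i; rw [Finset.sum_add_distrib, Finset.sum_const, Fin.card_Ioi, smul_eq_mul]
  simp_rw [h1]
  rw [Finset.sum_add_distrib, sum_Ioi_swapL]
  have h2 : ∀ j : Fin ℓ, ∑ i ∈ Finset.Iio j, g j = (j : ℕ) * g j := by
    intro j; rw [Finset.sum_const, Fin.card_Iio, smul_eq_mul]
  simp_rw [h2, ← Finset.sum_add_distrib, Finset.mul_sum]
  refine Finset.sum_congr rfl fun i _ => ?_
  rw [← add_mul]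
  congr 1
  omega

private lemma count_pairsL {ℓ : ℕ} : ∑ i : Fin ℓ, (Finset.Ioi i).card = ℓ * (ℓ - 1) / 2 := by
  simp_rw [Fin.card_Ioi]
  rw [Fin.sum_univ_eq_sum_range (fun i => ℓ - 1 - i)]
  have := Finset.sum_range_reflect (fun i => i) ℓ
  rw [this, Finset.sum_range_id]

private lemma exp_diffL (x y : ℝ) :
    Complex.exp ((2*x:ℝ)*Complex.I) - Complex.exp ((2*y:ℝ)*Complex.I)
      = Complex.I * Complex.exp (((x+y:ℝ))*Complex.I) * ((2 * Real.sin (x - y) : ℝ)) := by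
  have hs : Complex.exp ((↑x-↑y)*Complex.I) - Complex.exp (-(↑x-↑y)*Complex.I)
      = 2 * Complex.I * Complex.sin ((x:ℂ)-y) := by
    rw [Complex.sin]
    linear_combination (Complex.exp ((↑x-↑y)*Complex.I)
      - Complex.exp (-(↑x-↑y)*Complex.I)) * Complex.I_sq
  have e1 : ((2*x:ℝ):ℂ)*Complex.I = ((x+y:ℝ):ℂ)*Complex.I + ((x:ℂ)-↑y)*Complex.I := by
    push_cast; ring
  have e2 : ((2*y:ℝ):ℂ)*Complex.I = ((x+y:ℝ):ℂ)*Complex.I + (-((x:ℂ)-↑y))*Complex.I := by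
    push_cast; ring
  rw [e1, e2, Complex.exp_add, Complex.exp_add, ← mul_sub, hs]
  rw [show ((x:ℂ) - y) = ((x - y : ℝ) : ℂ) by push_cast; ring, ← Complex.ofReal_sin]
  push_cast
  ring

private lemma factorL (n a b : ℕ) (hn : 0 < n) (hab : a < b) (hbn : b < n) :
    Complex.exp (2*Real.pi*Complex.I/n) ^ b - Complex.exp (2*Real.pi*Complex.I/n) ^ a
      = Complex.I * Complex.exp (((Real.pi*(a+b)/n : ℝ))*Complex.I) *
        ((‖Complex.exp (2*Real.pi*Complex.I/n) ^ b
          - Complex.exp (2*Real.pi*Complex.I/n) ^ a‖ : ℝ) : ℂ) := by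
  have hn' : (n:ℝ) ≠ 0 := Nat.cast_ne_zero.mpr hn.ne'
  have hnc : (n:ℂ) ≠ 0 := Nat.cast_ne_zero.mpr hn.ne'
  have hpos : 0 < (n:ℝ) := by positivity
  have hba : (a:ℝ) < b := by exact_mod_cast hab
  have hpow : ∀ m : ℕ, Complex.exp (2*Real.pi*Complex.I/n) ^ m
      = Complex.exp ((2*(Real.pi*m/n) : ℝ)*Complex.I) := by
    intro m
    rw [← Complex.exp_nat_mul]
    congr 1
    push_cast
    field_simp
  have hsin : 0 < Real.sin (Real.pi*b/n - Real.pi*a/n) := by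
    apply Real.sin_pos_of_pos_of_lt_pi
    · rw [div_sub_div_same, ← mul_sub]
      exact div_pos (mul_pos Real.pi_pos (by linarith)) hpos
    · have hb : (b:ℝ) - a < n := by
        have h0 : (0:ℝ) ≤ a := by positivity
        have h3 : (b:ℝ) < n := by exact_mod_cast hbn
        linarith
      rw [div_sub_div_same, ← mul_sub]
      have h1 : ((b:ℝ)-a)/n < 1 := (div_lt_one hpos).2 hb
      rw [show Real.pi * ((b:ℝ)-a)/n = (((b:ℝ)-a)/n)*Real.pi by ring]
      nlinarith [Real.pi_pos]
  have key : Complex.exp (2*Real.pi*Complex.I/n) ^ b - Complex.exp (2*Real.pi*Complex.I/n) ^ a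
      = Complex.I * Complex.exp (((Real.pi*(a+b)/n : ℝ))*Complex.I)
        * ((2 * Real.sin (Real.pi*b/n - Real.pi*a/n) : ℝ) : ℂ) := by
    rw [hpow b, hpow a, exp_diffL (Real.pi*b/n) (Real.pi*a/n)]
    congr 3
    push_cast
    field_simp
    ring
  have habs : ‖Complex.exp (2*Real.pi*Complex.I/n) ^ b
      - Complex.exp (2*Real.pi*Complex.I/n) ^ a‖
      = 2 * Real.sin (Real.pi*b/n - Real.pi*a/n) := by
    rw [key, norm_mul, norm_mul, Complex.norm_I, Complex.norm_real, Real.norm_eq_abs, Complex.norm_exp,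
      abs_of_pos (by linarith : (0:ℝ) < 2 * Real.sin (Real.pi*b/n - Real.pi*a/n))]
    simp
  rw [habs, key]

private lemma prod_pairs_permL {M : Type*} [CommMonoid M] {ℓ : ℕ} (f : Fin ℓ → Fin ℓ → M)
    (hsymm : ∀ a b, f a b = f b a) (σ : Equiv.Perm (Fin ℓ)) :
    ∏ p ∈ Finset.univ.filter (fun p : Fin ℓ × Fin ℓ => p.1 < p.2), f (σ p.1) (σ p.2)
      = ∏ p ∈ Finset.univ.filter (fun p : Fin ℓ × Fin ℓ => p.1 < p.2), f p.1 p.2 := by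
  refine Finset.prod_nbij'
    (fun p => if σ p.1 < σ p.2 then (σ p.1, σ p.2) else (σ p.2, σ p.1))
    (fun p => if σ⁻¹ p.1 < σ⁻¹ p.2 then (σ⁻¹ p.1, σ⁻¹ p.2) else (σ⁻¹ p.2, σ⁻¹ p.1))
    ?_ ?_ ?_ ?_ ?_
  · intro p hp
    simp only [Finset.mem_filter, Finset.mem_univ, true_and] at hp ⊢
    split_ifs with h
    · exact h
    · exact lt_of_le_of_ne (not_lt.1 h) (fun he => hp.ne (σ.injective he).symm)
  · intro p hp
    simp only [Finset.mem_filter, Finset.mem_univ, true_and] at hp ⊢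
    split_ifs with h
    · exact h
    · exact lt_of_le_of_ne (not_lt.1 h) (fun he => hp.ne (σ⁻¹.injective he).symm)
  · intro p hp
    simp only [Finset.mem_filter, Finset.mem_univ, true_and] at hp
    split_ifs with h1 h2 h3 <;>
      simp_all [Prod.ext_iff, Equiv.symm_apply_apply] <;> omega
  · intro p hp
    simp only [Finset.mem_filter, Finset.mem_univ, true_and] at hp
    split_ifs with h1 h2 h3 <;>
      simp_all [Prod.ext_iff, Equiv.apply_symm_apply] <;> omega
  · intro p hp
    split_ifs with h
    · rfl
    · exact hsymm _ _

private lemma mono_detL (n ℓ : ℕ) (hn : 1 ≤ n) (hℓ : 1 ≤ ℓ)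
    (g : Fin ℓ → ℕ) (hlt : ∀ j, g j < n) (hmono : StrictMono g) :
    (Matrix.of fun j k : Fin ℓ =>
        (Complex.exp (2 * Real.pi * Complex.I / n * ((((n : ℝ) - ℓ + 1) / 2 : ℝ) + k))) ^ (g j)).det
      = (-1) ^ (∑ r, g r) * Complex.I ^ (ℓ * (ℓ - 1) / 2) *
        ∏ p ∈ Finset.univ.filter (fun p : Fin ℓ × Fin ℓ => p.1 < p.2),
          ((‖Complex.exp (2 * Real.pi * Complex.I / n) ^ (g p.2)
            - Complex.exp (2 * Real.pi * Complex.I / n) ^ (g p.1)‖ : ℝ) : ℂ) := by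
  have hnc : (n:ℂ) ≠ 0 := Nat.cast_ne_zero.mpr (by omega)
  have hmat : (Matrix.of fun j k : Fin ℓ =>
      (Complex.exp (2 * Real.pi * Complex.I / n * ((((n : ℝ) - ℓ + 1) / 2 : ℝ) + k))) ^ (g j))
      = Matrix.of (fun j k => Complex.exp (((Real.pi*((n:ℝ)-ℓ+1)*(g j)/n : ℝ)) * Complex.I) *
          Matrix.vandermonde (fun i => Complex.exp (2*Real.pi*Complex.I/n) ^ (g i)) j k) := by
    ext j k
    simp only [Matrix.of_apply, Matrix.vandermonde_apply]
    rw [← Complex.exp_nat_mul, ← pow_mul, ← Complex.exp_nat_mul, ← Complex.exp_add]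
    congr 1
    push_cast
    field_simp
  rw [hmat, Matrix.det_mul_column, Matrix.det_vandermonde]
  have hfac : ∀ i : Fin ℓ, ∀ j ∈ Finset.Ioi i,
      Complex.exp (2*Real.pi*Complex.I/n) ^ (g j) - Complex.exp (2*Real.pi*Complex.I/n) ^ (g i)
      = Complex.I * Complex.exp (((Real.pi*((g i)+(g j))/n : ℝ))*Complex.I)
        * ((‖Complex.exp (2*Real.pi*Complex.I/n) ^ (g j)
            - Complex.exp (2*Real.pi*Complex.I/n) ^ (g i)‖ : ℝ) : ℂ) := by
    intro i j hj
    exact factorL n (g i) (g j) (by omega) (hmono (Finset.mem_Ioi.mp hj)) (hlt j)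
  rw [Finset.prod_congr rfl (fun i _ => Finset.prod_congr rfl (hfac i))]
  simp_rw [Finset.prod_mul_distrib, Finset.prod_const, Finset.prod_pow_eq_pow_sum,
    count_pairsL, ← Complex.exp_sum]
  have h1 : ∑ j, ((Real.pi*((n:ℝ)-ℓ+1)*(g j)/n : ℝ) : ℂ) * Complex.I
      = ((∑ r, g r : ℕ) : ℂ) * (↑Real.pi * ((n:ℂ) - ℓ + 1)/n * Complex.I) := by
    have e : ∀ j : Fin ℓ, ((Real.pi*((n:ℝ)-ℓ+1)*(g j)/n : ℝ) : ℂ) * Complex.I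
        = ((g j : ℕ) : ℂ) * (↑Real.pi * ((n:ℂ) - ℓ + 1)/n * Complex.I) := by
      intro j; push_cast; ring
    simp_rw [e, ← Finset.sum_mul, ← Nat.cast_sum]
  have h2 : ∑ i, ∑ j ∈ Finset.Ioi i, ((Real.pi*((g i)+(g j))/n : ℝ) : ℂ) * Complex.I
      = (((ℓ-1) * ∑ r, g r : ℕ) : ℂ) * (↑Real.pi/n * Complex.I) := by
    have e : ∀ i j : Fin ℓ, ((Real.pi*((g i)+(g j))/n : ℝ) : ℂ) * Complex.I
        = ((g i + g j : ℕ) : ℂ) * (↑Real.pi/n * Complex.I) := by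
      intro i j; push_cast; ring
    simp_rw [e, ← Finset.sum_mul, ← Nat.cast_sum, sum_pairs_natL]
  rw [h1, h2]
  have hEE : Complex.exp (((∑ r, g r : ℕ) : ℂ) * (↑Real.pi * ((n:ℂ) - ℓ + 1)/n * Complex.I))
      * Complex.exp ((((ℓ-1) * ∑ r, g r : ℕ) : ℂ) * (↑Real.pi/n * Complex.I))
      = (-1) ^ (∑ r, g r) := by
    rw [← Complex.exp_add]
    have hph : ((∑ r, g r : ℕ) : ℂ) * (↑Real.pi * ((n:ℂ) - ℓ + 1)/n * Complex.I)
        + (((ℓ-1) * ∑ r, g r : ℕ) : ℂ) * (↑Real.pi/n * Complex.I)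
        = ((∑ r, g r : ℕ) : ℂ) * (↑Real.pi * Complex.I) := by
      have hc : (((ℓ-1) * ∑ r, g r : ℕ) : ℂ) = ((ℓ:ℂ)-1) * ((∑ r, g r : ℕ) : ℂ) := by
        push_cast [Nat.cast_sub hℓ]; ring
      rw [hc]
      field_simp
      ring
    rw [hph, Complex.exp_nat_mul, Complex.exp_pi_mul_I]
  rw [prod_pairsL (fun i j => ((‖Complex.exp (2 * Real.pi * Complex.I / n) ^ (g j)
      - Complex.exp (2 * Real.pi * Complex.I / n) ^ (g i)‖ : ℝ) : ℂ))]
  rw [← hEE]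
  ring

end Aux

/-- Vandermonde-type determinant evaluation: with `z_k = ω^{(n−ℓ+1)/2 + (k−1)}` (for
`ω = e^{2πi/n}`) and distinct `h_j ∈ {0,…,n−1}`, the determinant of `A_{j,k} = z_k^{h_j}`
equals `sgn(σ_h) (−1)^{∑ h} i^{ℓ(ℓ−1)/2} ∏_{j<k} |ω^{h_k} − ω^{h_j}|`, where `σ_h` is the
permutation sorting `h` increasingly. -/
theorem vandermonde_root_determinant (n ℓ : ℕ) (hn : 1 ≤ n) (hℓ : 1 ≤ ℓ)
    (h : Fin ℓ → ℕ) (hlt : ∀ j, h j < n) (hinj : Function.Injective h)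
    (σ : Equiv.Perm (Fin ℓ)) (hσ : StrictMono fun j => h (σ j)) :
    (Matrix.of fun j k : Fin ℓ =>
        (Complex.exp (2 * Real.pi * Complex.I / n * ((((n : ℝ) - ℓ + 1) / 2 : ℝ) + k))) ^ (h j)).det
      = ((Equiv.Perm.sign σ : ℤ) : ℂ) * (-1) ^ (∑ r, h r) * Complex.I ^ (ℓ * (ℓ - 1) / 2) *
        ∏ p ∈ Finset.univ.filter (fun p : Fin ℓ × Fin ℓ => p.1 < p.2),
          ((‖Complex.exp (2 * Real.pi * Complex.I / n) ^ (h p.2)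
            - Complex.exp (2 * Real.pi * Complex.I / n) ^ (h p.1)‖ : ℝ) : ℂ) := by
  have hs2 : ((Equiv.Perm.sign σ : ℤ) : ℂ) * ((Equiv.Perm.sign σ : ℤ) : ℂ) = 1 := by
    rcases Int.units_eq_one_or (Equiv.Perm.sign σ) with hs | hs <;> rw [hs] <;> norm_num
  have hdet := mono_detL n ℓ hn hℓ (fun j => h (σ j)) (fun j => hlt _) hσ
  have hd2 : (Matrix.of fun j k : Fin ℓ =>
        (Complex.exp (2 * Real.pi * Complex.I / n *
          ((((n : ℝ) - ℓ + 1) / 2 : ℝ) + k))) ^ (h (σ j))).det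
      = ((Equiv.Perm.sign σ : ℤ) : ℂ) * (Matrix.of fun j k : Fin ℓ =>
        (Complex.exp (2 * Real.pi * Complex.I / n *
          ((((n : ℝ) - ℓ + 1) / 2 : ℝ) + k))) ^ (h j)).det := by
    have := Matrix.det_permute σ (Matrix.of fun j k : Fin ℓ =>
        (Complex.exp (2 * Real.pi * Complex.I / n *
          ((((n : ℝ) - ℓ + 1) / 2 : ℝ) + k))) ^ (h j))
    rw [← this]
    rfl
  have hsum : ∑ r, h (σ r) = ∑ r, h r := Equiv.sum_comp σ h
  have hprod := prod_pairs_permL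
    (fun a b => ((‖Complex.exp (2 * Real.pi * Complex.I / n) ^ (h b)
      - Complex.exp (2 * Real.pi * Complex.I / n) ^ (h a)‖ : ℝ) : ℂ))
    (fun a b => by rw [norm_sub_rev]) σ
  rw [hsum, hprod] at hdet
  calc (Matrix.of fun j k : Fin ℓ =>
        (Complex.exp (2 * Real.pi * Complex.I / n *
          ((((n : ℝ) - ℓ + 1) / 2 : ℝ) + k))) ^ (h j)).det
      = (((Equiv.Perm.sign σ : ℤ) : ℂ) * ((Equiv.Perm.sign σ : ℤ) : ℂ)) *
        (Matrix.of fun j k : Fin ℓ =>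
        (Complex.exp (2 * Real.pi * Complex.I / n *
          ((((n : ℝ) - ℓ + 1) / 2 : ℝ) + k))) ^ (h j)).det := by rw [hs2, one_mul]
    _ = ((Equiv.Perm.sign σ : ℤ) : ℂ) * (Matrix.of fun j k : Fin ℓ =>
        (Complex.exp (2 * Real.pi * Complex.I / n *
          ((((n : ℝ) - ℓ + 1) / 2 : ℝ) + k))) ^ (h (σ j))).det := by
        rw [hd2]; ring
    _ = _ := by rw [hdet]; ring
end
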